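/- Suppose t₁,…,t_m ∈ ℍ \ D_C satisfy tr.deg._C C(t, J(t)) = 3·dim_G(t|C) + dim^j(t|C), where C = jcl(∅) ⊆ ℂ and D_C = ℍ ∩ C. Then for any z₁,…,z_n ∈ ℍ: tr.deg._{C(t,J(t))} C(z, t, J(z), J(t)) ≥ 3·dim_G(z | C ∪ t) + dim^j(z | C ∪ t). -/

import Mathlib

noncomputable section

open scoped Classical

/-- The group `GL₂(ℚ)`. -/
abbrev GL2Q := Matrix.GeneralLinearGroup (Fin 2) ℚ

variable {K : Type*} [Field K] [CharZero K]

/-- Entry of a matrix in `GL₂(ℚ)`. -/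
def mEntry (g : GL2Q) (i k : Fin 2) : ℚ := (g : Matrix (Fin 2) (Fin 2) ℚ) i k

/-- Numerator of the fractional linear action. -/
def moebNum (g : GL2Q) (x : K) : K := (mEntry g 0 0 : K) * x + (mEntry g 0 1 : K)

/-- Denominator of the fractional linear action. -/
def moebDen (g : GL2Q) (x : K) : K := (mEntry g 1 0 : K) * x + (mEntry g 1 1 : K)

/-- The fractional linear (Möbius) action `g·x = (ax+b)/(cx+d)`. -/
def moeb (g : GL2Q) (x : K) : K := moebNum g x / moebDen g x

/-- `MoebRel g x y` holds if the action of `g` at `x` is defined (denominator nonzero)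
and `g·x = y`. -/
def MoebRel (g : GL2Q) (x y : K) : Prop := moebDen g x ≠ 0 ∧ moeb g x = y

/-- The `G`-closure of a set `A ⊆ K`: all elements of the form `g·a`, `a ∈ A`, `g ∈ GL₂(ℚ)`. -/
def Gcl (A : Set K) : Set K := {x | ∃ a ∈ A, ∃ g : GL2Q, MoebRel g a x}

/-- A matrix is scalar if it is a rational multiple of the identity. -/
def IsScalarMat (g : GL2Q) : Prop :=
  ∃ r : ℚ, (g : Matrix (Fin 2) (Fin 2) ℚ) = r • (1 : Matrix (Fin 2) (Fin 2) ℚ)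

/-- `IsRed g m`: `m` is the reduced integral form of `g`, i.e. a positive rational
multiple of `g` with coprime integer entries. -/
def IsRed (g : GL2Q) (m : Matrix (Fin 2) (Fin 2) ℤ) : Prop :=
  (∃ r : ℚ, 0 < r ∧ ∀ i k, (m i k : ℚ) = r * mEntry g i k) ∧
    Int.gcd (Int.gcd (m 0 0) (m 0 1)) (Int.gcd (m 1 0) (m 1 1)) = 1

/-- `DetRed g N`: the determinant of the reduced form of `g` is `N`. -/
def DetRed (g : GL2Q) (N : ℤ) : Prop := ∃ m, IsRed g m ∧ m.det = N

/-- A `j`-field: a field of characteristic zero together with a domain `D` closed under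
the `GL₂(ℚ)`-action and functions `j, j', j'', j'''` satisfying the axioms of the
modular `j`-function (the differential equation, the modular-polynomial axioms and the
axiom on the singular values of `j`). -/
structure JField (K : Type*) [Field K] [CharZero K] where
  D : Set K
  j : K → K
  j' : K → K
  j'' : K → K
  j''' : K → K
  /-- The family of modular polynomials `Φ_N`. -/
  Φ : ℕ → MvPolynomial (Fin 2) ℤ
  D_closed : ∀ z ∈ D, ∀ g : GL2Q, moebDen g z ≠ 0 ∧ moeb g z ∈ D
  deq : ∀ z ∈ D, j z ≠ 0 → j z ≠ 1728 → j' z ≠ 0 →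
    j''' z / j' z - (3/2) * (j'' z / j' z)^2
      + ((j z)^2 - 1968 * j z + 2654208) / (2 * (j z)^2 * (j z - 1728)^2) * (j' z)^2 = 0
  mod_iff : ∀ z₁ ∈ D, ∀ z₂ ∈ D, ∀ N : ℕ, 0 < N →
    (MvPolynomial.aeval ![j z₁, j z₂] (Φ N) = 0 ↔
      ∃ g : GL2Q, DetRed g (N : ℤ) ∧ MoebRel g z₂ z₁)
  sing : ∀ z ∈ D, (j z = 0 ∨ j z = 1728 ∨ j' z = 0) →
    ∃ g : GL2Q, ¬ IsScalarMat g ∧ MoebRel g z z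

namespace JField

variable (F : JField K)

/-- A point of the domain is special if `Φ_N(j(z), j(z)) = 0` for some `N > 1`. -/
def Special (z : K) : Prop :=
  ∃ N : ℕ, 1 < N ∧ MvPolynomial.aeval ![F.j z, F.j z] (F.Φ N) = 0

/-- `J(S) = j(S) ∪ j'(S) ∪ j''(S)`. -/
def JImage (S : Set K) : Set K := F.j '' S ∪ F.j' '' S ∪ F.j'' '' S

/-- A `j`-derivation: a derivation `der` with `der(j⁽ᵗ⁾(z)) = j⁽ᵗ⁺¹⁾(z)·derz` for `z ∈ D`. -/
def IsJDer (der : Derivation ℚ K K) : Prop :=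
  ∀ z ∈ F.D, der (F.j z) = F.j' z * der z ∧ der (F.j' z) = F.j'' z * der z ∧
    der (F.j'' z) = F.j''' z * der z

/-- The `j`-closure of `X`: the intersection of the kernels of all `j`-derivations
vanishing on `X`. -/
def jcl (X : Set K) : Set K :=
  {a | ∀ der : Derivation ℚ K K, F.IsJDer der → (∀ x ∈ X, der x = 0) → der a = 0}

/-- The `j`-closure of a set, as a subfield. -/
def jclSubfield (X : Set K) : Subfield K where
  carrier := F.jcl X
  zero_mem' := fun der _ _ => by simp
  one_mem' := fun der _ _ => by simp
  add_mem' := fun ha hb der hj hX => by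
    rw [map_add, ha der hj hX, hb der hj hX, add_zero]
  mul_mem' := fun {a b} ha hb der hj hX => by
    rw [Derivation.leibniz, ha der hj hX, hb der hj hX]; simp
  neg_mem' := fun {a} ha der hj hX => by rw [map_neg, ha der hj hX, neg_zero]
  inv_mem' := fun a ha der hj hX => by
    rw [Derivation.leibniz_inv, ha der hj hX]; simp

end JField

/-- The transcendence degree of the field generated by `A` over the subfield `Fb`:
the least size of a finite subset `S ⊆ A` such that every element of `A` is algebraic
over `Fb(S)` (`⊤` if there is no such set). -/
def trdegNat (Fb : Subfield K) (A : Set K) : ℕ∞ :=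
  sInf {n : ℕ∞ | ∃ S : Finset K, ↑S ⊆ A ∧ (S.card : ℕ∞) = n ∧
    ∀ a ∈ A, IsAlgebraic (Subfield.closure ((Fb : Set K) ∪ ↑S)) a}

/-- The dimension of `A` over `B` in the pregeometry `Gcl`: the least size of a finite
subset `S ⊆ A` with `A ⊆ Gcl(S ∪ B)`. -/
def Gdim (A B : Set K) : ℕ∞ :=
  sInf {n : ℕ∞ | ∃ S : Finset K, ↑S ⊆ A ∧ (S.card : ℕ∞) = n ∧ A ⊆ Gcl (↑S ∪ B)}

namespace JField

variable (F : JField K)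

/-- The dimension of `A` over `B` in the pregeometry `jcl`. -/
def jdim (A B : Set K) : ℕ∞ :=
  sInf {n : ℕ∞ | ∃ S : Finset K, ↑S ⊆ A ∧ (S.card : ℕ∞) = n ∧ A ⊆ F.jcl (↑S ∪ B)}

end JField

/-- A `j`-subfield of a `j`-field `(K, D)`: a subfield `A` together with a subset
`D_A ⊆ D ∩ A` closed under the `GL₂(ℚ)`-action, such that `A` is closed under
`j, j', j'', j'''` on `D_A`. -/
structure JSubfield (F : JField K) where
  carrier : Subfield K
  dom : Set K
  dom_subset : dom ⊆ F.D
  dom_mem : ∀ z ∈ dom, z ∈ carrier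
  dom_closed : ∀ z ∈ dom, ∀ g : GL2Q, moeb g z ∈ dom
  jmem : ∀ z ∈ dom, F.j z ∈ carrier ∧ F.j' z ∈ carrier ∧ F.j'' z ∈ carrier ∧
    F.j''' z ∈ carrier

namespace JSubfield

variable {F : JField K}

/-- Inclusion of `j`-subfields. -/
def le (A B : JSubfield F) : Prop := A.carrier ≤ B.carrier ∧ A.dom ⊆ B.dom

/-- Union (compositum) of two `j`-subfields. -/
def union (A B : JSubfield F) : JSubfield F where
  carrier := A.carrier ⊔ B.carrier
  dom := A.dom ∪ B.dom
  dom_subset := Set.union_subset A.dom_subset B.dom_subset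
  dom_mem := by
    rintro z (hz | hz)
    · exact SetLike.le_def.mp le_sup_left (A.dom_mem z hz)
    · exact SetLike.le_def.mp le_sup_right (B.dom_mem z hz)
  dom_closed := by
    rintro z (hz | hz) g
    · exact Or.inl (A.dom_closed z hz g)
    · exact Or.inr (B.dom_closed z hz g)
  jmem := by
    rintro z (hz | hz)
    · obtain ⟨h1, h2, h3, h4⟩ := A.jmem z hz
      exact ⟨SetLike.le_def.mp le_sup_left h1, SetLike.le_def.mp le_sup_left h2,
        SetLike.le_def.mp le_sup_left h3, SetLike.le_def.mp le_sup_left h4⟩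
    · obtain ⟨h1, h2, h3, h4⟩ := B.jmem z hz
      exact ⟨SetLike.le_def.mp le_sup_right h1, SetLike.le_def.mp le_sup_right h2,
        SetLike.le_def.mp le_sup_right h3, SetLike.le_def.mp le_sup_right h4⟩

/-- Intersection of two `j`-subfields. -/
def inter (A B : JSubfield F) : JSubfield F where
  carrier := A.carrier ⊓ B.carrier
  dom := A.dom ∩ B.dom
  dom_subset := fun z hz => A.dom_subset hz.1
  dom_mem := fun z hz => ⟨A.dom_mem z hz.1, B.dom_mem z hz.2⟩
  dom_closed := fun z hz g => ⟨A.dom_closed z hz.1 g, B.dom_closed z hz.2 g⟩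
  jmem := fun z hz => by
    obtain ⟨a1, a2, a3, a4⟩ := A.jmem z hz.1
    obtain ⟨b1, b2, b3, b4⟩ := B.jmem z hz.2
    exact ⟨⟨a1, b1⟩, ⟨a2, b2⟩, ⟨a3, b3⟩, ⟨a4, b4⟩⟩

end JSubfield

namespace JField

variable (F : JField K)

/-- `A` is a `j`-subfield finitely generated over `Cs`: `A` is the smallest
`j`-subfield containing `Cs` and some finite set `X`. -/
def FinGenOver (Cs A : JSubfield F) : Prop :=
  Cs.le A ∧ ∃ X : Finset K, ↑X ⊆ (A.carrier : Set K) ∧ (↑X ∩ F.D ⊆ A.dom) ∧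
    ∀ B : JSubfield F, Cs.le B → ↑X ⊆ (B.carrier : Set K) → (↑X ∩ F.D ⊆ B.dom) → A.le B

/-- The predimension `δ_j(A | Cs) = tr.deg._Cs A − 3·dim_G(D_A | D_Cs)`. -/
def delta (Cs A : JSubfield F) : ℤ :=
  ((trdegNat Cs.carrier (A.carrier : Set K)).toNat : ℤ)
    - 3 * ((Gdim A.dom Cs.dom).toNat : ℤ)

/-- The predimension of a finite tuple `z` over a `j`-subfield `A`:
`tr.deg._A A(z, J(z)) − 3·dim_G(z | D_A)`. -/
def deltaTuple (A : JSubfield F) (z : Finset K) : ℤ :=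
  ((trdegNat A.carrier ((↑z : Set K) ∪ F.JImage ↑z)).toNat : ℤ)
    - 3 * ((Gdim (↑z : Set K) A.dom).toNat : ℤ)

/-- Self-sufficiency of an extension of `j`-subfields: `A ⊴ B` iff `A ≤ B` and
`δ_j(z | A) ≥ 0` for all finite tuples `z` from `D_B`. -/
def SelfSuff (A B : JSubfield F) : Prop :=
  A.le B ∧ ∀ z : Finset K, (↑z : Set K) ⊆ B.dom → 0 ≤ F.deltaTuple A z

/-- Self-sufficiency of a `j`-subfield in the ambient `j`-field `(K, D)`. -/
def SelfSuffAmb (A : JSubfield F) : Prop :=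
  ∀ z : Finset K, (↑z : Set K) ⊆ F.D → 0 ≤ F.deltaTuple A z

/-- The ambient `j`-field is graph-generated by `J`. -/
def GraphGenAmb : Prop := Subfield.closure (F.D ∪ F.JImage F.D) = ⊤

/-- A `j`-subfield is graph-generated by `J`. -/
def GraphGen (A : JSubfield F) : Prop :=
  A.carrier = Subfield.closure (A.dom ∪ F.JImage A.dom)

/-- Evaluation map for `j`-polynomials: the variable `(i, 0)` is sent to `aᵢ`, and
`(i, 1), (i, 2), (i, 3)` to `j(aᵢ), j'(aᵢ), j''(aᵢ)`. -/
def jVal {n : ℕ} (a : Fin n → K) : Fin n × Fin 4 → K :=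
  fun p => ![a p.1, F.j (a p.1), F.j' (a p.1), F.j'' (a p.1)] p.2

/-- The formal partial derivative `derf/derXᵢ` of a `j`-polynomial, evaluated at `a`,
where `j, j', j''` are differentiated by the chain rule. -/
def jpderivEval {n : ℕ} (i : Fin n) (f : MvPolynomial (Fin n × Fin 4) K)
    (a : Fin n → K) : K :=
  MvPolynomial.eval (F.jVal a) (MvPolynomial.pderiv (i, (0 : Fin 4)) f)
  + F.j' (a i) * MvPolynomial.eval (F.jVal a) (MvPolynomial.pderiv (i, (1 : Fin 4)) f)
  + F.j'' (a i) * MvPolynomial.eval (F.jVal a) (MvPolynomial.pderiv (i, (2 : Fin 4)) f)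
  + F.j''' (a i) * MvPolynomial.eval (F.jVal a) (MvPolynomial.pderiv (i, (3 : Fin 4)) f)

/-- `a` is a solution of the Khovanskii system of `j`-polynomials `f` over `B`:
the `fᵢ` have coefficients in the subring generated by `B`, vanish at `a`, and the
Jacobian determinant of formal `j`-polynomial partial derivatives does not vanish at `a`. -/
def IsKhovanskiiSol (B : Set K) {n : ℕ}
    (f : Fin n → MvPolynomial (Fin n × Fin 4) K) (a : Fin n → K) : Prop :=
  (∀ i m, (f i).coeff m ∈ Subring.closure B) ∧
  (∀ i, MvPolynomial.eval (F.jVal a) (f i) = 0) ∧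
  (Matrix.of fun i k => F.jpderivEval k (f i) a).det ≠ 0

/-- The Khovanskii closure `kcl(B)`: elements which are the first coordinate of a
non-singular solution of a Khovanskii system of `j`-polynomials over `B`. -/
def kcl (B : Set K) : Set K :=
  {a | ∃ (n : ℕ) (f : Fin (n+1) → MvPolynomial (Fin (n+1) × Fin 4) K)
    (x : Fin (n+1) → K), x 0 = a ∧ F.IsKhovanskiiSol B f x}

end JField

/-- `z` is a `Gcl`-basis of `Ddom` over `B`: the coordinates of `z` lie in `Ddom`,
span `Ddom` over `B`, and are `Gcl`-independent over `B`. -/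
def IsGclBasis {n : ℕ} (z : Fin n → K) (Ddom B : Set K) : Prop :=
  (∀ i, z i ∈ Ddom) ∧ Ddom ⊆ Gcl (Set.range z ∪ B) ∧
  ∀ i, z i ∉ Gcl ((Set.range z \ {z i}) ∪ B)


namespace JField

variable (F : JField K)

/-- The predimension of a finite set `X` over `(C, D_C)` with `C = jcl(∅)`:
`δ_j(X) = tr.deg._C C(X, J(dom)) − 3·dim_G(X ∩ D | D_C)`, where `dom = Gcl((X ∩ D) ∪ D_C)`
is the domain of the `j`-subfield generated by `X` over `(C, D_C)`. -/
def deltaFinset (X : Finset K) : ℤ :=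
  ((trdegNat (F.jclSubfield ∅)
      ((↑X : Set K) ∪ F.JImage (Gcl (((↑X : Set K) ∩ F.D) ∪ (F.jcl ∅ ∩ F.D))))).toNat : ℤ)
    - 3 * ((Gdim ((↑X : Set K) ∩ F.D) (F.jcl ∅ ∩ F.D)).toNat : ℤ)

end JField

end
noncomputable section MyHelpers
open scoped Classical

variable {K : Type*} [Field K] [CharZero K]

lemma enat_sInf_mem {s : Set ℕ∞} (hne : s.Nonempty)
    (hc : ∀ x ∈ s, ∃ k : ℕ, x = ↑k) : sInf s ∈ s := by
  obtain ⟨x, hx⟩ := hne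
  set T : Set ℕ := {k | (↑k : ℕ∞) ∈ s} with hT
  have hTne : T.Nonempty := by
    obtain ⟨k, rfl⟩ := hc x hx
    exact ⟨k, hx⟩
  have hmem : (↑(sInf T) : ℕ∞) ∈ s := Nat.sInf_mem hTne
  have heq : sInf s = (↑(sInf T) : ℕ∞) := by
    apply le_antisymm (sInf_le hmem)
    apply le_sInf
    intro b hb
    obtain ⟨j, rfl⟩ := hc b hb
    exact_mod_cast Nat.sInf_le hb
  rw [heq]; exact hmem

/-- Abstract closure-operator dimension matching `Gdim`/`jdim`. -/
def cdimSet (cl : Set K → Set K) (A B : Set K) : Set ℕ∞ :=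
  {n | ∃ S : Finset K, ↑S ⊆ A ∧ (S.card : ℕ∞) = n ∧ A ⊆ cl (↑S ∪ B)}

def cdim (cl : Set K → Set K) (A B : Set K) : ℕ∞ := sInf (cdimSet cl A B)

structure IsPregeom (cl : Set K → Set K) : Prop where
  mono : ∀ {X Y : Set K}, X ⊆ Y → cl X ⊆ cl Y
  extensive : ∀ X : Set K, X ⊆ cl X
  trans : ∀ {X Y : Set K}, X ⊆ cl Y → cl X ⊆ cl Y
  exch : ∀ (X : Set K) (a b : K), a ∈ cl (X ∪ {b}) → a ∉ cl X → b ∈ cl (X ∪ {a})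

def CIndep (cl : Set K → Set K) (I : Finset K) (B : Set K) : Prop :=
  ∀ x ∈ I, x ∉ cl (↑(I.erase x) ∪ B)

variable {cl : Set K → Set K}

lemma steinitz (h : IsPregeom cl) (B : Set K) :
    ∀ (N : ℕ) (I S : Finset K), (I \ S).card ≤ N → CIndep cl I B →
      ↑I ⊆ cl (↑S ∪ B) → I.card ≤ S.card := by
  intro N
  induction N with
  | zero =>
    intro I S hd _ _
    have hIS : I ⊆ S := by
      intro x hx
      by_contra hxS
      have h1 : x ∈ I \ S := Finset.mem_sdiff.2 ⟨hx, hxS⟩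
      have := Finset.card_pos.2 ⟨x, h1⟩
      omega
    exact Finset.card_le_card hIS
  | succ N ih =>
    intro I S hd hI hsp
    by_cases hIS : I ⊆ S
    · exact Finset.card_le_card hIS
    obtain ⟨a, haI, haS⟩ := Finset.not_subset.1 hIS
    have hPS : a ∈ cl (↑S ∪ B) := hsp haI
    set 𝒮 := S.powerset.filter (fun S₀ : Finset K => a ∈ cl (↑S₀ ∪ B)) with h𝒮
    have hSin : S ∈ 𝒮 := by
      rw [h𝒮, Finset.mem_filter, Finset.mem_powerset]; exact ⟨le_rfl, hPS⟩
    obtain ⟨S₀, hS₀mem, hmin⟩ := Finset.exists_min_image 𝒮 Finset.card ⟨S, hSin⟩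
    rw [h𝒮, Finset.mem_filter, Finset.mem_powerset] at hS₀mem
    obtain ⟨hS₀S, haS₀⟩ := hS₀mem
    have hnot : ¬ (S₀ ⊆ I.erase a) := by
      intro hsub
      exact hI a haI (h.mono (Set.union_subset_union_left B (Finset.coe_subset.2 hsub)) haS₀)
    obtain ⟨s, hsS₀, hsIa⟩ := Finset.not_subset.1 hnot
    have hsa : s ≠ a := fun h' => haS (hS₀S (h' ▸ hsS₀))
    have hsI : s ∉ I := fun hsI => hsIa (Finset.mem_erase.2 ⟨hsa, hsI⟩)
    have hna : a ∉ cl (↑(S₀.erase s) ∪ B) := by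
      intro hmem
      have hmem𝒮 : S₀.erase s ∈ 𝒮 := by
        rw [h𝒮, Finset.mem_filter, Finset.mem_powerset]
        exact ⟨(Finset.erase_subset _ _).trans hS₀S, hmem⟩
      have h1 := hmin _ hmem𝒮
      have h2 := Finset.card_erase_of_mem hsS₀
      have h3 := Finset.card_pos.2 ⟨s, hsS₀⟩
      omega
    have hacl : a ∈ cl ((↑(S₀.erase s) ∪ B) ∪ {s}) := by
      have hset : (↑S₀ : Set K) ∪ B = (↑(S₀.erase s) ∪ B) ∪ {s} := by
        ext y
        simp only [Set.mem_union, Finset.coe_erase, Set.mem_diff, Set.mem_singleton_iff,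
          Finset.mem_coe]
        constructor
        · rintro (hy | hy)
          · by_cases hys : y = s
            · tauto
            · tauto
          · tauto
        · rintro ((⟨hy, _⟩ | hy) | rfl)
          · tauto
          · tauto
          · exact Or.inl hsS₀
      rwa [hset] at haS₀
    have hs_ex := h.exch _ a s hacl hna
    set S' := insert a (S.erase s) with hS'
    have hsub' : (↑(S₀.erase s) ∪ B) ∪ {a} ⊆ ↑S' ∪ B := by
      rintro y ((hy | hy) | rfl)
      · refine Or.inl ?_
        rw [hS']
        simp only [Finset.coe_insert, Set.mem_insert_iff, Finset.mem_coe]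
        right
        rw [Finset.coe_erase] at hy
        exact Finset.mem_erase.2 ⟨hy.2, hS₀S (by exact hy.1)⟩
      · exact Or.inr hy
      · exact Or.inl (by rw [hS']; simp)
    have hscl : s ∈ cl (↑S' ∪ B) := h.mono hsub' hs_ex
    have hSsub : (↑S : Set K) ∪ B ⊆ cl (↑S' ∪ B) := by
      rintro y (hy | hy)
      · by_cases hys : y = s
        · exact hys ▸ hscl
        · refine h.extensive _ (Or.inl ?_)
          rw [hS']
          simp only [Finset.coe_insert, Set.mem_insert_iff, Finset.mem_coe]
          exact Or.inr (Finset.mem_erase.2 ⟨hys, by exact hy⟩)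
      · exact h.extensive _ (Or.inr hy)
    have hsp' : ↑I ⊆ cl (↑S' ∪ B) := fun x hx => h.trans hSsub (hsp hx)
    have hcard' : S'.card ≤ S.card := by
      have haS'' : a ∉ S.erase s := fun h' => haS (Finset.mem_of_mem_erase h')
      rw [hS', Finset.card_insert_of_notMem haS'', Finset.card_erase_of_mem (hS₀S hsS₀)]
      have := Finset.card_pos.2 ⟨s, hS₀S hsS₀⟩
      omega
    have hd' : (I \ S').card ≤ N := by
      have hsub : I \ S' ⊆ (I \ S).erase a := by
        intro x hx
        rw [Finset.mem_sdiff] at hx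
        have hxa : x ≠ a := fun h' => hx.2 (by rw [hS', h']; simp)
        refine Finset.mem_erase.2 ⟨hxa, Finset.mem_sdiff.2 ⟨hx.1, fun hxS => hx.2 ?_⟩⟩
        rw [hS']
        exact Finset.mem_insert_of_mem
          (Finset.mem_erase.2 ⟨fun h' => hsI (h' ▸ hx.1), hxS⟩)
      have h1 := Finset.card_le_card hsub
      have h2 := Finset.card_erase_of_mem (Finset.mem_sdiff.2 ⟨haI, haS⟩)
      have h3 := Finset.card_pos.2 ⟨a, Finset.mem_sdiff.2 ⟨haI, haS⟩⟩
      omega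
    exact (ih I S' hd' hI hsp').trans hcard'

lemma cdim_witness (h : IsPregeom cl) {A : Set K} (hA : A.Finite) (B : Set K) :
    ∃ S : Finset K, ↑S ⊆ A ∧ (S.card : ℕ∞) = cdim cl A B ∧ A ⊆ cl (↑S ∪ B) ∧
      ∀ S' : Finset K, ↑S' ⊆ A → A ⊆ cl (↑S' ∪ B) → S.card ≤ S'.card := by
  have hne : (cdimSet cl A B).Nonempty := by
    refine ⟨hA.toFinset.card, hA.toFinset, by simp, rfl, ?_⟩
    intro x hx
    exact h.extensive _ (Or.inl (by simpa using hx))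
  have hc : ∀ x ∈ cdimSet cl A B, ∃ k : ℕ, x = ↑k := by
    rintro x ⟨S, _, rfl, _⟩; exact ⟨S.card, rfl⟩
  obtain ⟨S, hSA, hcard, hsp⟩ := enat_sInf_mem hne hc
  refine ⟨S, hSA, hcard, hsp, ?_⟩
  intro S' hS'A hsp'
  have : cdim cl A B ≤ (S'.card : ℕ∞) := sInf_le ⟨S', hS'A, rfl, hsp'⟩
  rw [cdim, ← hcard] at this
  exact_mod_cast this

lemma cindep_of_min (h : IsPregeom cl) {A B : Set K} {S : Finset K} (hSA : ↑S ⊆ A)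
    (hsp : A ⊆ cl (↑S ∪ B))
    (hmin : ∀ S' : Finset K, ↑S' ⊆ A → A ⊆ cl (↑S' ∪ B) → S.card ≤ S'.card) :
    CIndep cl S B := by
  intro s hs hscl
  have h1 : (↑S : Set K) ∪ B ⊆ cl (↑(S.erase s) ∪ B) := by
    rintro x (hx | hx)
    · by_cases hxs : x = s
      · exact hxs ▸ hscl
      · exact h.extensive _ (Or.inl (Finset.mem_coe.2 (Finset.mem_erase.2 ⟨hxs, by exact hx⟩)))
    · exact h.extensive _ (Or.inr hx)
  have h2 : A ⊆ cl (↑(S.erase s) ∪ B) := fun x hx => h.trans h1 (hsp hx)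
  have h3 := hmin (S.erase s) (fun x hx => hSA ((Finset.erase_subset _ _) (by exact hx))) h2
  have h4 := Finset.card_erase_of_mem hs
  have h5 := Finset.card_pos.2 ⟨s, hs⟩
  omega

lemma cindep_union (h : IsPregeom cl) {T Z B : Set K} {S₁ S₂ : Finset K}
    (hS₁T : ↑S₁ ⊆ T) (hS₂Z : ↑S₂ ⊆ Z) (h₁ : CIndep cl S₁ B) (h₂ : CIndep cl S₂ (B ∪ T)) :
    Disjoint S₁ S₂ ∧ CIndep cl (S₁ ∪ S₂) B := by
  have hdisj : Disjoint S₁ S₂ := by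
    rw [Finset.disjoint_left]
    intro x hx1 hx2
    exact h₂ x hx2 (h.extensive _ (Or.inr (Or.inr (hS₁T hx1))))
  refine ⟨hdisj, ?_⟩
  intro x hx hxcl
  rcases Finset.mem_union.1 hx with hx1 | hx2
  · -- x ∈ S₁
    have hx2 : x ∉ S₂ := fun hx2 => Finset.disjoint_left.1 hdisj hx1 hx2
    -- x ∈ cl (↑(S₁.erase x) ∪ ↑S₂ ∪ B)
    have hstep : x ∈ cl ((↑(S₁.erase x) ∪ ↑S₂) ∪ B) := by
      refine h.mono ?_ hxcl
      apply Set.union_subset_union_left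
      intro y hy
      simp only [Finset.coe_erase, Set.mem_diff, Finset.mem_coe, Finset.mem_union,
        Set.mem_union, Set.mem_singleton_iff] at hy ⊢
      rcases hy with ⟨hy1 | hy1, hy2⟩
      · exact Or.inl ⟨hy1, hy2⟩
      · exact Or.inr hy1
    -- minimal W ⊆ S₂ such that x ∈ cl ((↑(S₁.erase x) ∪ ↑W) ∪ B)
    set 𝒲 := S₂.powerset.filter (fun W : Finset K => x ∈ cl ((↑(S₁.erase x) ∪ ↑W) ∪ B)) with h𝒲
    have hS₂in : S₂ ∈ 𝒲 := by
      rw [h𝒲, Finset.mem_filter, Finset.mem_powerset]; exact ⟨le_rfl, hstep⟩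
    obtain ⟨W, hWmem, hWmin⟩ := Finset.exists_min_image 𝒲 Finset.card ⟨S₂, hS₂in⟩
    rw [h𝒲, Finset.mem_filter, Finset.mem_powerset] at hWmem
    obtain ⟨hWS₂, hxW⟩ := hWmem
    rcases Finset.eq_empty_or_nonempty W with rfl | ⟨u, huW⟩
    · refine h₁ x hx1 ?_
      simpa using hxW
    · have hnx : x ∉ cl ((↑(S₁.erase x) ∪ ↑(W.erase u)) ∪ B) := by
        intro hmem
        have hmem𝒲 : W.erase u ∈ 𝒲 := by
          rw [h𝒲, Finset.mem_filter, Finset.mem_powerset]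
          exact ⟨(Finset.erase_subset _ _).trans hWS₂, hmem⟩
        have hh1 := hWmin _ hmem𝒲
        have hh2 := Finset.card_erase_of_mem huW
        have hh3 := Finset.card_pos.2 ⟨u, huW⟩
        omega
      have hx_u : x ∈ cl (((↑(S₁.erase x) ∪ ↑(W.erase u)) ∪ B) ∪ {u}) := by
        have hset : (↑(S₁.erase x) ∪ (↑W : Set K)) ∪ B
            = ((↑(S₁.erase x) ∪ ↑(W.erase u)) ∪ B) ∪ {u} := by
          ext y
          simp only [Set.mem_union, Finset.coe_erase, Set.mem_diff, Finset.mem_coe,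
            Set.mem_singleton_iff]
          constructor
          · rintro ((hy | hy) | hy)
            · tauto
            · by_cases hyu : y = u
              · tauto
              · tauto
            · tauto
          · rintro (((hy | ⟨hy, _⟩) | hy) | rfl)
            · tauto
            · tauto
            · tauto
            · exact Or.inl (Or.inr huW)
        rwa [hset] at hxW
      have hu := h.exch _ x u hx_u hnx
      refine h₂ u (hWS₂ huW) (h.mono ?_ hu)
      rintro y (((hy | hy) | hy) | rfl)
      · -- y ∈ S₁.erase x ⊆ T
        rw [Finset.coe_erase] at hy
        exact Or.inr (Or.inr (hS₁T hy.1))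
      · -- y ∈ W.erase u ⊆ S₂.erase u
        refine Or.inl ?_
        rw [Finset.coe_erase] at hy ⊢
        exact ⟨hWS₂ (by exact hy.1), hy.2⟩
      · exact Or.inr (Or.inl hy)
      · exact Or.inr (Or.inr (hS₁T hx1))
  · -- x ∈ S₂
    refine h₂ x hx2 (h.mono ?_ hxcl)
    rintro y (hy | hy)
    · rw [Finset.coe_erase] at hy
      rcases Finset.mem_union.1 (Finset.mem_coe.1 hy.1) with hy1 | hy1
      · exact Or.inr (Or.inr (hS₁T hy1))
      · refine Or.inl ?_
        rw [Finset.coe_erase]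
        exact ⟨hy1, hy.2⟩
    · exact Or.inr (Or.inl hy)

lemma cdim_superadd (h : IsPregeom cl) {T Z : Set K} (B : Set K)
    (hT : T.Finite) (hZ : Z.Finite) :
    cdim cl T B + cdim cl Z (B ∪ T) ≤ cdim cl (T ∪ Z) B := by
  obtain ⟨S₁, hS₁T, hc₁, hsp₁, hmin₁⟩ := cdim_witness h hT B
  obtain ⟨S₂, hS₂Z, hc₂, hsp₂, hmin₂⟩ := cdim_witness h hZ (B ∪ T)
  have h₁ := cindep_of_min h hS₁T hsp₁ hmin₁
  have h₂ := cindep_of_min h hS₂Z hsp₂ hmin₂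
  obtain ⟨hdisj, hindep⟩ := cindep_union h hS₁T hS₂Z h₁ h₂
  rw [← hc₁, ← hc₂]
  apply le_sInf
  rintro n ⟨S, hSA, rfl, hsp⟩
  have hsub : ↑(S₁ ∪ S₂) ⊆ cl (↑S ∪ B) := by
    intro x hx
    rcases Finset.mem_union.1 (Finset.mem_coe.1 hx) with hx1 | hx2
    · exact hsp (Or.inl (hS₁T hx1))
    · exact hsp (Or.inr (hS₂Z hx2))
  have hst := steinitz h B ((S₁ ∪ S₂) \ S).card (S₁ ∪ S₂) S le_rfl hindep hsub
  rw [Finset.card_union_of_disjoint hdisj] at hst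
  exact_mod_cast hst

lemma cdim_ne_top (h : IsPregeom cl) {A : Set K} (hA : A.Finite) (B : Set K) :
    cdim cl A B ≠ ⊤ := by
  obtain ⟨S, _, hc, _, _⟩ := cdim_witness h hA B
  rw [← hc]
  exact_mod_cast WithTop.coe_ne_top

end MyHelpers
noncomputable section MoebiusHelpers
open scoped Classical

variable {K : Type*} [Field K] [CharZero K]

lemma mEntry_mul (g h : GL2Q) (i k : Fin 2) :
    mEntry (g * h) i k = mEntry g i 0 * mEntry h 0 k + mEntry g i 1 * mEntry h 1 k := by
  simp [mEntry, Units.val_mul, Matrix.mul_apply, Fin.sum_univ_two]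

lemma mEntry_one (i k : Fin 2) : mEntry (1 : GL2Q) i k = if i = k then 1 else 0 := by
  simp [mEntry, Units.val_one, Matrix.one_apply]

lemma moebDen_one (x : K) : moebDen (1 : GL2Q) x = 1 := by
  simp [moebDen, mEntry_one]

lemma moeb_one (x : K) : moeb (1 : GL2Q) x = x := by
  simp [moeb, moebDen_one, moebNum, mEntry_one]

lemma moebRel_one (x : K) : MoebRel (1 : GL2Q) x x :=
  ⟨by rw [moebDen_one]; exact one_ne_zero, moeb_one x⟩

lemma moebDen_mul (g h : GL2Q) (x : K) (hh : moebDen h x ≠ 0) :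
    moebDen (g * h) x = moebDen g (moeb h x) * moebDen h x := by
  simp only [moebDen, moeb, moebNum, mEntry_mul]
  push_cast
  simp only [moebDen] at hh; rw [add_mul _ _ (_ + _), mul_assoc _ (_ / _), div_mul_cancel₀ _ hh]
  ring

lemma moebNum_mul (g h : GL2Q) (x : K) (hh : moebDen h x ≠ 0) :
    moebNum (g * h) x = moebNum g (moeb h x) * moebDen h x := by
  simp only [moebDen, moeb, moebNum, mEntry_mul]
  push_cast
  simp only [moebDen] at hh; rw [add_mul _ _ (_ + _), mul_assoc _ (_ / _), div_mul_cancel₀ _ hh]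
  ring

lemma moeb_mul (g h : GL2Q) (x : K) (hh : moebDen h x ≠ 0)
    (hg : moebDen g (moeb h x) ≠ 0) :
    moeb (g * h) x = moeb g (moeb h x) := by
  rw [moeb, moebNum_mul g h x hh, moebDen_mul g h x hh, mul_div_mul_right _ _ hh]; rfl

lemma MoebRel.comp {g h : GL2Q} {x y z : K} (hh : MoebRel h x y) (hg : MoebRel g y z) :
    MoebRel (g * h) x z := by
  obtain ⟨h1, h2⟩ := hh
  obtain ⟨g1, g2⟩ := hg
  subst h2
  constructor
  · rw [moebDen_mul g h x h1]
    exact mul_ne_zero g1 h1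
  · rw [moeb_mul g h x h1 g1, g2]

lemma MoebRel.symm {g : GL2Q} {x y : K} (hg : MoebRel g x y) : MoebRel g⁻¹ y x := by
  obtain ⟨h1, h2⟩ := hg
  subst h2
  have hden : moebDen (g⁻¹ * g) x = moebDen g⁻¹ (moeb g x) * moebDen g x :=
    moebDen_mul g⁻¹ g x h1
  rw [inv_mul_cancel g, moebDen_one] at hden
  have hne : moebDen g⁻¹ (moeb g x) ≠ 0 := by
    intro hz
    rw [hz, zero_mul] at hden
    exact one_ne_zero (α := K) hden
  refine ⟨hne, ?_⟩
  rw [← moeb_mul g⁻¹ g x h1 hne, inv_mul_cancel g, moeb_one]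

lemma gcl_pregeom : IsPregeom (Gcl (K := K)) := by
  constructor
  · rintro X Y hXY y ⟨a, ha, g, hg⟩
    exact ⟨a, hXY ha, g, hg⟩
  · intro X x hx
    exact ⟨x, hx, 1, moebRel_one x⟩
  · rintro X Y hXY y ⟨a, haX, g, hrel⟩
    obtain ⟨b, hbY, h, hrel'⟩ := hXY haX
    exact ⟨b, hbY, g * h, hrel'.comp hrel⟩
  · rintro X a b ⟨c, hc, g, hrel⟩ haX
    rcases hc with hcX | hcb
    · exact absurd ⟨c, hcX, g, hrel⟩ haX
    · rw [Set.mem_singleton_iff] at hcb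
      subst hcb
      exact ⟨a, Or.inr rfl, g⁻¹, hrel.symm⟩

end MoebiusHelpers

noncomputable section JclHelpers
open scoped Classical

variable {K : Type*} [Field K] [CharZero K]

lemma JField.isJDer_comb (F : JField K) {d₁ d₂ : Derivation ℚ K K}
    (h₁ : F.IsJDer d₁) (h₂ : F.IsJDer d₂) (c₁ c₂ : K) :
    F.IsJDer (c₁ • d₁ - c₂ • d₂) := by
  intro z hz
  obtain ⟨a1, a2, a3⟩ := h₁ z hz
  obtain ⟨b1, b2, b3⟩ := h₂ z hz
  refine ⟨?_, ?_, ?_⟩ <;>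
    simp only [Derivation.sub_apply, Derivation.smul_apply, smul_eq_mul, a1, a2, a3,
      b1, b2, b3] <;> ring

lemma jcl_pregeom (F : JField K) : IsPregeom F.jcl := by
  constructor
  · intro X Y hXY a ha der hj hY
    exact ha der hj (fun x hx => hY x (hXY hx))
  · intro X x hx der _ hX
    exact hX x hx
  · intro X Y hXY a ha der hj hY
    exact ha der hj (fun x hx => hXY hx der hj hY)
  · intro X a b h1 h2 der hj hX
    by_contra hb
    have hex : ∃ d₀ : Derivation ℚ K K, F.IsJDer d₀ ∧ (∀ x ∈ X, d₀ x = 0) ∧ d₀ a ≠ 0 := by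
      by_contra hc
      push_neg at hc
      exact h2 (fun d hd hX' => hc d hd hX')
    obtain ⟨d₀, hd₀j, hd₀X, hd₀a⟩ := hex
    set D : Derivation ℚ K K := der b • d₀ - d₀ b • der with hD
    have hDj : F.IsJDer D := F.isJDer_comb hd₀j hj _ _
    have hDX : ∀ x ∈ X ∪ {b}, D x = 0 := by
      rintro x (hxX | hxb)
      · simp [hD, hd₀X x hxX, hX x (Or.inl hxX)]
      · rw [Set.mem_singleton_iff] at hxb
        subst hxb
        simp [hD]
        ring
    have hDa : D a = 0 := h1 D hDj hDX
    rw [hD] at hDa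
    simp only [Derivation.sub_apply, Derivation.smul_apply, smul_eq_mul] at hDa
    rw [hX a (Or.inr rfl), mul_zero, sub_zero] at hDa
    rcases mul_eq_zero.1 hDa with h' | h'
    · exact hb h'
    · exact hd₀a h'

lemma jcl_idem (F : JField K) (X : Set K) : F.jcl (F.jcl X) = F.jcl X :=
  le_antisymm ((jcl_pregeom F).trans (le_refl (F.jcl X)))
    ((jcl_pregeom F).mono ((jcl_pregeom F).extensive X))

end JclHelpers
noncomputable section TrdegHelpers
open scoped Classical

variable {K : Type*} [Field K] [CharZero K]

lemma isAlgebraic_of_range_subset {F₁ F₂ : Type*} [Field F₁] [Field F₂]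
    [Algebra F₁ K] [Algebra F₂ K]
    (h : Set.range (algebraMap F₁ K) ⊆ Set.range (algebraMap F₂ K)) {a : K}
    (ha : IsAlgebraic F₁ a) : IsAlgebraic F₂ a := by
  obtain ⟨p, hp, hpa⟩ := ha
  have hinj : Function.Injective (algebraMap F₂ K) := (algebraMap F₂ K).injective
  choose f hf using fun x : F₁ => h (Set.mem_range_self x)
  let φ : F₁ →+* F₂ :=
    { toFun := f
      map_one' := hinj (by rw [hf]; simp)
      map_mul' := fun x y => hinj (by rw [hf]; simp [hf])
      map_zero' := hinj (by rw [hf]; simp)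
      map_add' := fun x y => hinj (by rw [hf]; simp [hf]) }
  have hcomp : (algebraMap F₂ K).comp φ = algebraMap F₁ K := RingHom.ext fun x => hf x
  refine ⟨p.map φ, ?_, ?_⟩
  · intro hz
    exact hp ((Polynomial.map_eq_zero_iff φ.injective).1 hz)
  · rw [Polynomial.aeval_def, Polynomial.eval₂_map, hcomp, ← Polynomial.aeval_def]
    exact hpa

lemma Subfield.range_algebraMap' (L : Subfield K) :
    Set.range (algebraMap L K) = (L : Set K) := Subtype.range_coe

lemma isAlgebraic_subfield_mono {L L' : Subfield K} (h : L ≤ L') {a : K}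
    (ha : IsAlgebraic L a) : IsAlgebraic L' a := by
  refine isAlgebraic_of_range_subset ?_ ha
  rw [Subfield.range_algebraMap', Subfield.range_algebraMap']
  exact h

/-- elements of a subfield are algebraic over it -/
lemma isAlgebraic_of_mem (L : Subfield K) {a : K} (ha : a ∈ L) : IsAlgebraic L a :=
  isAlgebraic_algebraMap (⟨a, ha⟩ : L)

def trdegSet (Fb : Subfield K) (A : Set K) : Set ℕ∞ :=
  {n : ℕ∞ | ∃ S : Finset K, ↑S ⊆ A ∧ (S.card : ℕ∞) = n ∧
    ∀ a ∈ A, IsAlgebraic (Subfield.closure ((Fb : Set K) ∪ ↑S)) a}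

lemma trdegNat_eq (Fb : Subfield K) (A : Set K) : trdegNat Fb A = sInf (trdegSet Fb A) := rfl

lemma trdegNat_witness {Fb : Subfield K} {A : Set K} (h : trdegNat Fb A ≠ ⊤) :
    ∃ S : Finset K, ↑S ⊆ A ∧ (S.card : ℕ∞) = trdegNat Fb A ∧
      ∀ a ∈ A, IsAlgebraic (Subfield.closure ((Fb : Set K) ∪ ↑S)) a := by
  have hne : (trdegSet Fb A).Nonempty := by
    by_contra hc
    rw [Set.not_nonempty_iff_eq_empty] at hc
    rw [trdegNat_eq, hc, sInf_empty] at h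
    exact h rfl
  have hc : ∀ x ∈ trdegSet Fb A, ∃ k : ℕ, x = ↑k := by
    rintro x ⟨S, _, rfl, _⟩; exact ⟨S.card, rfl⟩
  obtain ⟨S, h1, h2, h3⟩ := enat_sInf_mem hne hc
  exact ⟨S, h1, h2, h3⟩

lemma trdegNat_le_of_finite (Fb : Subfield K) {A : Set K} (hA : A.Finite) :
    trdegNat Fb A ≤ (hA.toFinset.card : ℕ∞) := by
  apply sInf_le
  refine ⟨hA.toFinset, by simp, rfl, ?_⟩
  intro a ha
  exact isAlgebraic_of_mem _ (Subfield.subset_closure (Or.inr (by simpa using ha)))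

lemma trdegNat_ne_top (Fb : Subfield K) {A : Set K} (hA : A.Finite) :
    trdegNat Fb A ≠ ⊤ :=
  ne_top_of_le_ne_top (WithTop.coe_ne_top) (trdegNat_le_of_finite Fb hA)

set_option synthInstance.maxHeartbeats 1000000 in
set_option maxHeartbeats 1000000 in
lemma trdegNat_subadd (Fb : Subfield K) (A B : Set K) :
    trdegNat Fb (A ∪ B) ≤ trdegNat Fb A
      + trdegNat (Subfield.closure ((Fb : Set K) ∪ A)) B := by
  rcases eq_or_ne (trdegNat Fb A) ⊤ with hA | hA
  · rw [hA, top_add]; exact le_top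
  rcases eq_or_ne (trdegNat (Subfield.closure ((Fb : Set K) ∪ A)) B) ⊤ with hB | hB
  · rw [hB, add_top]; exact le_top
  obtain ⟨SA, hSA, hcA, halgA⟩ := trdegNat_witness hA
  obtain ⟨SB, hSB, hcB, halgB⟩ := trdegNat_witness hB
  set L0 : Subfield K := Subfield.closure ((Fb : Set K) ∪ ↑(SA ∪ SB)) with hL0
  set I : IntermediateField L0 K := IntermediateField.adjoin L0 A with hI
  -- A-elements are algebraic over L0
  have hL0le : Subfield.closure ((Fb : Set K) ∪ ↑SA) ≤ L0 := by
    apply Subfield.closure_mono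
    apply Set.union_subset_union_right
    intro y hy
    simp only [Finset.coe_union, Set.mem_union]
    exact Or.inl hy
  have halgA' : ∀ a ∈ A, IsAlgebraic L0 a := fun a ha =>
    isAlgebraic_subfield_mono hL0le (halgA a ha)
  -- the adjoin is algebraic
  have hadj : Algebra.IsAlgebraic L0 I :=
    IntermediateField.isAlgebraic_adjoin (fun x hx => (halgA' x hx).isIntegral)
  haveI := hadj
  haveI : Algebra.IsIntegral L0 I := hadj.isIntegral
  -- key closure inclusion
  have hsubI : (Subfield.closure ((Subfield.closure ((Fb : Set K) ∪ A) : Set K) ∪ ↑SB) : Set K)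
      ⊆ (I : Set K) := by
    have hrange : (L0 : Set K) ⊆ (I : Set K) := by
      intro y hy
      have : y = algebraMap L0 K ⟨y, hy⟩ := rfl
      rw [this]
      exact I.algebraMap_mem _
    have h1 : Subfield.closure ((Fb : Set K) ∪ A) ≤ I.toSubfield := by
      rw [Subfield.closure_le]
      rintro y (hy | hy)
      · exact hrange (Subfield.subset_closure (Or.inl hy))
      · exact IntermediateField.subset_adjoin _ _ hy
    have h2 : Subfield.closure ((Subfield.closure ((Fb : Set K) ∪ A) : Set K) ∪ ↑SB)
        ≤ I.toSubfield := by
      rw [Subfield.closure_le]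
      rintro y (hy | hy)
      · exact h1 hy
      · refine hrange (Subfield.subset_closure (Or.inr ?_))
        simp only [Finset.coe_union, Set.mem_union]
        exact Or.inr hy
    exact h2
  -- B-elements are algebraic over I, hence over L0
  have halgB' : ∀ b ∈ B, IsAlgebraic L0 b := by
    intro b hb
    have hbI : IsAlgebraic I b := by
      refine isAlgebraic_of_range_subset ?_ (halgB b hb)
      rw [Subfield.range_algebraMap']
      rw [show Set.range (algebraMap I K) = (I : Set K) from Subtype.range_coe]
      exact hsubI
    exact (isIntegral_trans b hbI.isIntegral).isAlgebraic
  -- assemble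
  rw [← hcA, ← hcB]
  have hle : trdegNat Fb (A ∪ B) ≤ ((SA ∪ SB).card : ℕ∞) := by
    apply sInf_le
    refine ⟨SA ∪ SB, ?_, rfl, ?_⟩
    · intro y hy
      rcases Finset.mem_union.1 (Finset.mem_coe.1 hy) with hy | hy
      · exact Or.inl (hSA hy)
      · exact Or.inr (hSB hy)
    · rintro a (ha | hb)
      · exact isAlgebraic_subfield_mono hL0le (halgA a ha)
      · exact halgB' a hb
  refine hle.trans ?_
  have := Finset.card_union_le SA SB
  exact_mod_cast this

end TrdegHelpers
noncomputable section GlueHelpers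
open scoped Classical

variable {K : Type*} [Field K] [CharZero K]

lemma range_fin_append {α : Type*} {m n : ℕ} (t : Fin m → α) (z : Fin n → α) :
    Set.range (Fin.append t z) = Set.range t ∪ Set.range z := by
  ext x
  constructor
  · rintro ⟨i, rfl⟩
    refine Fin.addCases (fun j => ?_) (fun j => ?_) i
    · rw [Fin.append_left]; exact Or.inl ⟨j, rfl⟩
    · rw [Fin.append_right]; exact Or.inr ⟨j, rfl⟩
  · rintro (⟨i, rfl⟩ | ⟨i, rfl⟩)
    · exact ⟨Fin.castAdd n i, Fin.append_left t z i⟩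
    · exact ⟨Fin.natAdd m i, Fin.append_right t z i⟩

lemma JField.JImage_union (F : JField K) (A B : Set K) :
    F.JImage (A ∪ B) = F.JImage A ∪ F.JImage B := by
  simp only [JField.JImage, Set.image_union]
  ext x
  simp only [Set.mem_union]
  tauto

lemma JField.JImage_finite (F : JField K) {A : Set K} (hA : A.Finite) :
    (F.JImage A).Finite :=
  ((hA.image F.j).union (hA.image F.j')).union (hA.image F.j'')

lemma Gdim_eq_cdim (A B : Set K) : Gdim A B = cdim Gcl A B := rfl

lemma jdim_eq_cdim (F : JField K) (A B : Set K) : F.jdim A B = cdim F.jcl A B := rfl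

end GlueHelpers
set_option maxHeartbeats 1000000 in
/-- (For the complex `j`-field, assuming the Ax–Schanuel-derived
inequality over `jcl`-closed subfields.) If `t₁, …, t_m ∈ ℍ \ D_C` satisfy
`tr.deg._C C(t, J(t)) = 3·dim_G(t|C) + dim^j(t|C)` where `C = jcl(∅)`, then for all
`z₁, …, z_n ∈ ℍ`:
`tr.deg._{C(t,J(t))} C(z, t, J(z), J(t)) ≥ 3·dim_G(z|C ∪ t) + dim^j(z|C ∪ t)`. -/
theorem AS_over_convenient_generators (JF : JField ℂ)
    (hD : JF.D = {w : ℂ | w.im ≠ 0})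
    (hAS : ∀ L : Subfield ℂ, (L : Set ℂ) = JF.jcl ↑L →
      ∀ (n : ℕ) (z : Fin n → ℂ), (∀ i, z i ∈ JF.D) →
        3 * Gdim (Set.range z) (L : Set ℂ) + JF.jdim (Set.range z) ↑L ≤
          trdegNat L (Set.range z ∪ JF.JImage (Set.range z)))
    {m : ℕ} (t : Fin m → ℂ) (ht : ∀ i, t i ∈ JF.D ∧ t i ∉ JF.jcl ∅)
    (hA2 : trdegNat (JF.jclSubfield ∅) (Set.range t ∪ JF.JImage (Set.range t))
      = 3 * Gdim (Set.range t) (JF.jcl ∅) + JF.jdim (Set.range t) (JF.jcl ∅)) :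
    ∀ (n : ℕ) (z : Fin n → ℂ), (∀ i, z i ∈ JF.D) →
      3 * Gdim (Set.range z) (JF.jcl ∅ ∪ Set.range t)
        + JF.jdim (Set.range z) (JF.jcl ∅ ∪ Set.range t) ≤
      trdegNat (Subfield.closure (JF.jcl ∅ ∪ Set.range t ∪ JF.JImage (Set.range t)))
        (Set.range z ∪ JF.JImage (Set.range z)) := by
  intro n z hz
  classical
  set C : Set ℂ := JF.jcl ∅ with hC
  set T : Set ℂ := Set.range t with hT
  set Z : Set ℂ := Set.range z with hZ
  have hTfin : T.Finite := Set.finite_range t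
  have hZfin : Z.Finite := Set.finite_range z
  -- the jcl-closed base subfield
  have hCsub : ((JF.jclSubfield ∅ : Subfield ℂ) : Set ℂ) = C := rfl
  have hclosed : ((JF.jclSubfield ∅ : Subfield ℂ) : Set ℂ)
      = JF.jcl ↑(JF.jclSubfield ∅) := (jcl_idem JF ∅).symm
  -- combined tuple
  have hw : ∀ i, Fin.append t z i ∈ JF.D := by
    intro i
    refine Fin.addCases (fun j => ?_) (fun j => ?_) i
    · rw [Fin.append_left]; exact (ht j).1
    · rw [Fin.append_right]; exact hz j
  have hASw := hAS (JF.jclSubfield ∅) hclosed (m + n) (Fin.append t z) hw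
  rw [range_fin_append t z, hCsub] at hASw
  -- hASw : 3 * Gdim (T ∪ Z) C + JF.jdim (T ∪ Z) C
  --          ≤ trdegNat (JF.jclSubfield ∅) ((T ∪ Z) ∪ JF.JImage (T ∪ Z))
  -- rewrite the generated set
  have hseteq : (T ∪ Z) ∪ JF.JImage (T ∪ Z)
      = (T ∪ JF.JImage T) ∪ (Z ∪ JF.JImage Z) := by
    rw [JF.JImage_union]
    ext x
    simp only [Set.mem_union]
    tauto
  rw [hseteq] at hASw
  -- transcendence degree subadditivity
  have hsub := trdegNat_subadd (JF.jclSubfield ∅) (T ∪ JF.JImage T) (Z ∪ JF.JImage Z)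
  -- identify the base field of the goal
  have hbase : Subfield.closure (C ∪ T ∪ JF.JImage T)
      = Subfield.closure (((JF.jclSubfield ∅ : Subfield ℂ) : Set ℂ) ∪ (T ∪ JF.JImage T)) := by
    apply congrArg
    rw [hCsub]
    ext x
    simp only [Set.mem_union]
    tauto
  -- dimension superadditivity
  have hGsuper : Gdim T C + Gdim Z (C ∪ T) ≤ Gdim (T ∪ Z) C := by
    rw [Gdim_eq_cdim, Gdim_eq_cdim, Gdim_eq_cdim]
    exact cdim_superadd gcl_pregeom C hTfin hZfin
  have hjsuper : JF.jdim T C + JF.jdim Z (C ∪ T) ≤ JF.jdim (T ∪ Z) C := by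
    rw [jdim_eq_cdim, jdim_eq_cdim, jdim_eq_cdim]
    exact cdim_superadd (jcl_pregeom JF) C hTfin hZfin
  -- the quantity to cancel
  set a : ℕ∞ := 3 * Gdim T C + JF.jdim T C with ha
  have ha_ne : a ≠ ⊤ := by
    rw [← hA2]
    exact trdegNat_ne_top _ (hTfin.union (JF.JImage_finite hTfin))
  set x : ℕ∞ := 3 * Gdim Z (C ∪ T) + JF.jdim Z (C ∪ T) with hx
  set y : ℕ∞ := trdegNat (Subfield.closure (((JF.jclSubfield ∅ : Subfield ℂ) : Set ℂ)
      ∪ (T ∪ JF.JImage T))) (Z ∪ JF.JImage Z) with hy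
  have hchain : a + x ≤ a + y := by
    have h1 : a + x = 3 * (Gdim T C + Gdim Z (C ∪ T)) + (JF.jdim T C + JF.jdim Z (C ∪ T)) := by
      rw [ha, hx]; ring
    have h2 : 3 * (Gdim T C + Gdim Z (C ∪ T)) + (JF.jdim T C + JF.jdim Z (C ∪ T))
        ≤ 3 * Gdim (T ∪ Z) C + JF.jdim (T ∪ Z) C :=
      add_le_add (mul_le_mul_right hGsuper 3) hjsuper
    have h3 : trdegNat (JF.jclSubfield ∅) (T ∪ JF.JImage T) = a := hA2
    calc a + x = 3 * (Gdim T C + Gdim Z (C ∪ T)) + (JF.jdim T C + JF.jdim Z (C ∪ T)) := h1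
      _ ≤ 3 * Gdim (T ∪ Z) C + JF.jdim (T ∪ Z) C := h2
      _ ≤ trdegNat (JF.jclSubfield ∅) ((T ∪ JF.JImage T) ∪ (Z ∪ JF.JImage Z)) := hASw
      _ ≤ trdegNat (JF.jclSubfield ∅) (T ∪ JF.JImage T) + y := hsub
      _ = a + y := by rw [h3]
  have hxy : x ≤ y := (WithTop.add_le_add_iff_left ha_ne).1 hchain
  rw [hbase]
  exact hxy
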